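/- (Schur's theorem.) Let F be a field, and let U and V be F-vector spaces. Let S be a nonzero linear subspace of Hom(U,V) in which every operator has rank at most 1. Then one of the following holds: (i) there exist a nonzero linear form f ∈ U* and a linear subspace V₀ of V such that S = { f ⊗ y : y ∈ V₀ }; (ii) there exist a nonzero vector y ∈ V and a linear subspace U₀' of U* such that S = { g ⊗ y : g ∈ U₀' }. -/

import Mathlib

section SchurAux

variable {F U V : Type*} [Field F] [AddCommGroup U] [Module F U] [AddCommGroup V] [Module F V]

/-- Decomposition of a nonzero rank ≤ 1 operator. -/
lemma exists_smulRight_of_rank_le_one (T : U →ₗ[F] V) (hT : T ≠ 0)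
    (h : LinearMap.rank T ≤ 1) :
    ∃ (f : U →ₗ[F] F) (y : V), f ≠ 0 ∧ y ≠ 0 ∧ T = f.smulRight y := by
  obtain ⟨y, hymem, hle⟩ := (rank_submodule_le_one_iff (LinearMap.range T)).mp h
  have hy : y ≠ 0 := by
    rintro rfl
    apply hT
    ext x
    have : T x ∈ (Submodule.span F {(0:V)}) := hle (LinearMap.mem_range_self T x)
    simpa using this
  have hrange : ∀ x : U, T x ∈ Submodule.span F {y} := fun x =>
    hle (LinearMap.mem_range_self T x)
  let e := LinearEquiv.toSpanNonzeroSingleton F V y hy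
  let f : U →ₗ[F] F := e.symm.toLinearMap ∘ₗ T.codRestrict (Submodule.span F {y}) hrange
  have hfx : ∀ x, f x • y = T x := by
    intro x
    have h1 : (e (f x) : V) = f x • y := by
      rw [LinearEquiv.toSpanNonzeroSingleton_apply]
    have h2 : e (f x) = T.codRestrict (Submodule.span F {y}) hrange x :=
      e.apply_symm_apply _
    rw [← h1, h2]
    rfl
  refine ⟨f, y, ?_, hy, ?_⟩
  · intro hf0
    apply hT
    ext x
    have := hfx x
    rw [hf0] at this
    simpa using this.symm
  · ext x
    simp [hfx x]

/-- If `g` is not a multiple of `f`, some point of `ker f` is outside `ker g`. -/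
lemma exists_ker_not_ker (f g : U →ₗ[F] F) (hf : f ≠ 0) (h : ¬ ∃ c : F, g = c • f) :
    ∃ x, f x = 0 ∧ g x ≠ 0 := by
  by_contra hc
  push_neg at hc
  obtain ⟨x₁, hx₁⟩ := DFunLike.ne_iff.mp hf
  simp only [LinearMap.zero_apply] at hx₁
  apply h
  refine ⟨g x₁ / f x₁, ?_⟩
  ext z
  have hz : f (z - (f z / f x₁) • x₁) = 0 := by
    simp [map_sub, map_smul]
    field_simp
    simp
  have := hc _ hz
  simp only [map_sub, map_smul, sub_eq_zero, smul_eq_mul] at this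
  simp only [LinearMap.smul_apply, smul_eq_mul]
  rw [this]
  field_simp

/-- Key dichotomy: if `f ⊗ a + g ⊗ b` has rank at most one, then either `g` is a
multiple of `f` or `b` is a multiple of `a`. -/
lemma dichot (f g : U →ₗ[F] F) (a b : V) (hf : f ≠ 0) (ha : a ≠ 0)
    (h : LinearMap.rank (f.smulRight a + g.smulRight b) ≤ 1) :
    (∃ c : F, g = c • f) ∨ (∃ c : F, b = c • a) := by
  by_contra hc
  push_neg at hc
  obtain ⟨hgf, hba⟩ := hc
  obtain ⟨x₀, hfx₀, hgx₀⟩ := exists_ker_not_ker f g hf (by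
    intro ⟨c, hce⟩; exact hgf c hce)
  obtain ⟨x₁, hfx₁⟩ := DFunLike.ne_iff.mp hf
  simp only [LinearMap.zero_apply] at hfx₁
  set W := f.smulRight a + g.smulRight b with hW
  obtain ⟨v₀, hv₀mem, hle⟩ := (rank_submodule_le_one_iff (LinearMap.range W)).mp h
  have hWx : ∀ x, W x ∈ Submodule.span F {v₀} := fun x => hle (LinearMap.mem_range_self W x)
  have hb : b ∈ Submodule.span F {v₀} := by
    have h0 : W x₀ = g x₀ • b := by simp [hW, hfx₀]
    have := hWx x₀
    rw [h0] at this
    have := Submodule.smul_mem _ (g x₀)⁻¹ this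
    rwa [inv_smul_smul₀ hgx₀] at this
  have haa : a ∈ Submodule.span F {v₀} := by
    have h1 : f x₁ • a = W x₁ - g x₁ • b := by simp [hW]
    have : f x₁ • a ∈ Submodule.span F {v₀} :=
      h1 ▸ Submodule.sub_mem _ (hWx x₁) (Submodule.smul_mem _ _ hb)
    have := Submodule.smul_mem _ (f x₁)⁻¹ this
    rwa [inv_smul_smul₀ hfx₁] at this
  obtain ⟨α, hα⟩ := Submodule.mem_span_singleton.mp haa
  obtain ⟨β, hβ⟩ := Submodule.mem_span_singleton.mp hb
  have hα0 : α ≠ 0 := by rintro rfl; simp at hα; exact ha hα.symm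
  apply hba (β / α)
  rw [← hβ, ← hα, smul_smul, div_mul_cancel₀ _ hα0]

/-- `y ↦ f.smulRight y` as a linear map. -/
def srL (f : U →ₗ[F] F) : V →ₗ[F] (U →ₗ[F] V) where
  toFun y := f.smulRight y
  map_add' y y' := by ext x; simp [smul_add]
  map_smul' c y := by
    ext x
    simp only [LinearMap.smulRight_apply, LinearMap.smul_apply, RingHom.id_apply]
    rw [smul_comm]

/-- `g ↦ g.smulRight y` as a linear map. -/
def srR (y : V) : (U →ₗ[F] F) →ₗ[F] (U →ₗ[F] V) where
  toFun g := g.smulRight y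
  map_add' g g' := by ext x; simp [add_smul]
  map_smul' c g := by ext x; simp [mul_smul]

end SchurAux

/-- Schur's theorem: a nonzero linear subspace `S` of `Hom(U,V)` in which every operator
has rank at most `1` is either of the form `f ⊗ V₀` for a nonzero linear form `f` on `U`
and a subspace `V₀` of `V`, or of the form `U₀' ⊗ y` for a nonzero vector `y` of `V`
and a subspace `U₀'` of `U*`. -/
theorem schur_rank_one_spaces (F : Type*) [Field F]
    (U V : Type*) [AddCommGroup U] [Module F U] [AddCommGroup V] [Module F V]
    (S : Submodule F (U →ₗ[F] V)) (hS : S ≠ ⊥)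
    (hrk : ∀ u ∈ S, LinearMap.rank u ≤ 1) :
    (∃ f : U →ₗ[F] F, f ≠ 0 ∧ ∃ V₀ : Submodule F V,
      (S : Set (U →ₗ[F] V)) = {u | ∃ y ∈ V₀, u = f.smulRight y}) ∨
    (∃ y : V, y ≠ 0 ∧ ∃ U₀' : Submodule F (U →ₗ[F] F),
      (S : Set (U →ₗ[F] V)) = {u | ∃ g ∈ U₀', u = g.smulRight y}) := by
  obtain ⟨T, hTS, hT0⟩ := Submodule.exists_mem_ne_zero_of_ne_bot hS
  obtain ⟨f, y₀, hf, hy₀, hTeq⟩ := exists_smulRight_of_rank_le_one T hT0 (hrk T hTS)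
  by_cases hcase : ∀ u ∈ S, ∃ y : V, u = f.smulRight y
  · left
    refine ⟨f, hf, S.comap (srL f), ?_⟩
    ext u
    simp only [SetLike.mem_coe, Set.mem_setOf_eq]
    constructor
    · intro hu
      obtain ⟨y, rfl⟩ := hcase u hu
      exact ⟨y, by simpa [srL, Submodule.mem_comap] using hu, rfl⟩
    · rintro ⟨y, hy, rfl⟩
      simpa [srL, Submodule.mem_comap] using hy
  · right
    push_neg at hcase
    obtain ⟨u, huS, hu⟩ := hcase
    have hu0 : u ≠ 0 := by rintro rfl; exact hu 0 (by ext x; simp)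
    obtain ⟨g, b, hg, hb0, hueq⟩ := exists_smulRight_of_rank_le_one u hu0 (hrk u huS)
    have hgf : ¬ ∃ c : F, g = c • f := by
      rintro ⟨c, rfl⟩
      apply hu (c • b)
      rw [hueq]
      ext x
      simp [smul_smul, mul_comm]
    obtain ⟨cb, hcb⟩ : ∃ c : F, b = c • y₀ := by
      have hmem : T + u ∈ S := S.add_mem hTS huS
      have h1 := hrk _ hmem
      rw [hTeq, hueq] at h1
      rcases dichot f g y₀ b hf hy₀ h1 with h | h
      · exact absurd h hgf
      · exact h
    have key : ∀ w ∈ S, ∃ h : U →ₗ[F] F, w = h.smulRight y₀ := by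
      intro w hwS
      by_cases hw0 : w = 0
      · exact ⟨0, by rw [hw0]; ext x; simp⟩
      obtain ⟨h, cw, hh, hcw0, hweq⟩ := exists_smulRight_of_rank_le_one w hw0 (hrk w hwS)
      have case1 : (∃ c : F, h = c • f) ∨ (∃ c : F, cw = c • y₀) := by
        have hmem : T + w ∈ S := S.add_mem hTS hwS
        have h1 := hrk _ hmem
        rw [hTeq, hweq] at h1
        exact dichot f h y₀ cw hf hy₀ h1
      have hdone : ∀ c : F, cw = c • y₀ → ∃ h' : U →ₗ[F] F, w = h'.smulRight y₀ := by
        intro c hc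
        refine ⟨c • h, ?_⟩
        rw [hweq, hc]
        ext x
        simp [smul_smul, mul_comm]
      rcases case1 with ⟨c₁, hc₁⟩ | ⟨c, hc⟩
      · have case2 : (∃ c : F, h = c • g) ∨ (∃ c : F, cw = c • b) := by
          have hmem : u + w ∈ S := S.add_mem huS hwS
          have h1 := hrk _ hmem
          rw [hueq, hweq] at h1
          exact dichot g h b cw hg hb0 h1
        rcases case2 with ⟨c₂, hc₂⟩ | ⟨c, hc⟩
        · exfalso
          have hc₂0 : c₂ ≠ 0 := by
            rintro rfl
            rw [zero_smul] at hc₂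
            exact hh hc₂
          apply hgf
          refine ⟨c₂⁻¹ * c₁, ?_⟩
          rw [mul_smul, ← hc₁, hc₂, inv_smul_smul₀ hc₂0]
        · exact hdone (c * cb) (by rw [hc, hcb, smul_smul])
      · exact hdone c hc
    refine ⟨y₀, hy₀, S.comap (srR y₀), ?_⟩
    ext w
    simp only [SetLike.mem_coe, Set.mem_setOf_eq]
    constructor
    · intro hw
      obtain ⟨h, rfl⟩ := key w hw
      exact ⟨h, by simpa [srR, Submodule.mem_comap] using hw, rfl⟩
    · rintro ⟨h, hh, rfl⟩
      simpa [srR, Submodule.mem_comap] using hh
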